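/- Let A be an n×n complex matrix with eigenvalue λ and associated eigenvector x (Ax = λx, x ≠ 0), and let q be any n-dimensional vector. Then the characteristic polynomial of A + x qᵀ equals the characteristic polynomial of A multiplied by (t - λ - qᵀx)/(t - λ); equivalently, the eigenvalues of A + x qᵀ are those of A with λ replaced by λ + qᵀx (counted with multiplicity). -/

import Mathlib

open Matrix Polynomial

lemma eval_charpoly_eq_det {n : ℕ} (M : Matrix (Fin n) (Fin n) ℂ) (t : ℂ) :
    M.charpoly.eval t = (t • (1 : Matrix (Fin n) (Fin n) ℂ) - M).det := by
  rw [Matrix.charpoly, ← Polynomial.coe_evalRingHom, RingHom.map_det]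
  congr 1
  ext i j
  rw [RingHom.mapMatrix_apply, Matrix.map_apply]
  by_cases h : i = j
  · subst h
    simp [charmatrix_apply_eq, Matrix.one_apply, Matrix.smul_apply]
  · simp [charmatrix_apply_ne _ _ _ h, Matrix.one_apply_ne h, Matrix.smul_apply]

/-- Brauer's theorem: the characteristic polynomial of the rank-one update `A + x qᵀ`
equals that of `A` with the eigenvalue `λ` replaced by `λ + qᵀx`. -/
theorem brauer {n : ℕ} (A : Matrix (Fin n) (Fin n) ℂ) (x q : Fin n → ℂ) (lam : ℂ)
    (hx : x ≠ 0) (hAx : A.mulVec x = lam • x) :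
    (A + vecMulVec x q).charpoly * (X - C lam)
      = A.charpoly * (X - C (lam + q ⬝ᵥ x)) := by
  apply Polynomial.eq_of_infinite_eval_eq
  have h0 : A.charpoly ≠ 0 := A.charpoly_monic.ne_zero
  have hfin : Set.Finite { t : ℂ | A.charpoly.IsRoot t } :=
    Polynomial.finite_setOf_isRoot h0
  apply Set.Infinite.mono _ (hfin.infinite_compl)
  intro t ht
  simp only [Set.mem_compl_iff, Set.mem_setOf_eq, Polynomial.IsRoot] at ht
  -- `M = t • 1 - A` is invertible
  set M : Matrix (Fin n) (Fin n) ℂ := t • (1 : Matrix (Fin n) (Fin n) ℂ) - A with hM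
  have hdet : M.det ≠ 0 := by rw [← eval_charpoly_eq_det]; exact ht
  -- `t ≠ lam` since `lam` is a root of the characteristic polynomial
  have hlamroot : A.charpoly.eval lam = 0 := by
    rw [eval_charpoly_eq_det]
    rw [← Matrix.exists_mulVec_eq_zero_iff]
    refine ⟨x, hx, ?_⟩
    simp [Matrix.sub_mulVec, hAx, Matrix.smul_mulVec]
  have htlam : t ≠ lam := fun h => ht (h ▸ hlamroot)
  have htlam' : t - lam ≠ 0 := sub_ne_zero.mpr htlam
  -- `M *ᵥ x = (t - lam) • x`, hence `M⁻¹ *ᵥ x = (t - lam)⁻¹ • x`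
  have hMx : M *ᵥ x = (t - lam) • x := by
    simp [hM, Matrix.sub_mulVec, hAx, Matrix.smul_mulVec, sub_smul]
  have hMinvx : M⁻¹ *ᵥ x = (t - lam)⁻¹ • x := by
    have h1 : M⁻¹ *ᵥ (M *ᵥ x) = x := by
      rw [Matrix.mulVec_mulVec, Matrix.nonsing_inv_mul M hdet.isUnit, Matrix.one_mulVec]
    rw [hMx, Matrix.mulVec_smul] at h1
    rw [eq_comm, inv_smul_eq_iff₀ htlam', h1]
  -- evaluate both sides
  show _ = _
  simp only [Set.mem_setOf_eq, Polynomial.eval_mul, Polynomial.eval_sub, Polynomial.eval_X,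
    Polynomial.eval_C, eval_charpoly_eq_det]
  have key : t • (1 : Matrix (Fin n) (Fin n) ℂ) - (A + vecMulVec x q)
      = M + Matrix.replicateCol Unit (-x) * Matrix.replicateRow Unit q := by
    ext i j
    simp [hM, Matrix.vecMulVec_apply, Matrix.mul_apply, Matrix.sub_apply, Matrix.add_apply]
    ring
  rw [key, Matrix.det_add_replicateCol_mul_replicateRow hdet.isUnit]
  have hval : (1 + Matrix.replicateRow Unit q * M⁻¹ * Matrix.replicateCol Unit (-x)).det
      = 1 - (t - lam)⁻¹ * (q ⬝ᵥ x) := by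
    rw [Matrix.det_unique]
    have : Matrix.replicateRow Unit q * M⁻¹ * Matrix.replicateCol Unit (-x)
        = Matrix.replicateRow Unit (q ᵥ* M⁻¹) * Matrix.replicateCol Unit (-x) := by
      rw [Matrix.replicateRow_vecMul]
    rw [Matrix.add_apply, Matrix.one_apply_eq, this, Matrix.replicateRow_mul_replicateCol_apply]
    rw [dotProduct_neg, ← Matrix.dotProduct_mulVec, hMinvx]
    simp [dotProduct_smul, smul_eq_mul]
    ring
  rw [hval]
  have harith : (1 - (t - lam)⁻¹ * (q ⬝ᵥ x)) * (t - lam) = t - (lam + q ⬝ᵥ x) := by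
    field_simp
    ring
  rw [mul_assoc, harith]
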